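/- Fix N ≥ 1, constants α_a, β_a, μ_a ∈ ℝ with β_a ≠ 0, and constants τ_{ab} ∈ ℝ for a ≠ b with τ_{ab} = −τ_{ba}. On the open set U = {(S_a,I_a,R_a)_{a=1}^N ∈ ℝ^{3N} : β_a·S_a − μ_a > 0 for all a}, define the skew-symmetric matrix-valued map π₂ with entries π₂_{S_a I_a} = −β_a·S_a·I_a + μ_a·I_a, π₂_{S_a R_a} = β_a·S_a·I_a − μ_a·I_a, π₂_{I_a R_a} = −β_a·S_a·I_a + μ_a·I_a, π₂_{R_a R_b} = τ_{ab} for a ≠ b, all other independent entries zero, and the Hamiltonian H₂ = −∑_{k=1}^N (R_k + (α_k/β_k)·log(β_k·S_k − μ_k)). Then (i) π₂ satisfies the Jacobi identity on U, and (ii) for all points of U, π₂·∇H₂ has components (−β_a·S_a·I_a + μ_a·I_a, β_a·S_a·I_a − (α_a+μ_a)·I_a, α_a·I_a − ∑_{k≠a} τ_{ak}) in the (S_a, I_a, R_a) coordinates. -/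

import Mathlib

/-- A pointwise skew-symmetric matrix-valued map satisfies the Jacobi identity on a set `U`
if for all `x ∈ U` and indices `i j k`,
`∑ l, (P_{l i}(x)·∂_l P_{j k}(x) + P_{l j}(x)·∂_l P_{k i}(x) + P_{l k}(x)·∂_l P_{i j}(x)) = 0`. -/
def JacobiIdentityOn {n : Type*} [Fintype n] [DecidableEq n]
    (P : (n → ℝ) → Matrix n n ℝ) (U : Set (n → ℝ)) : Prop :=
  ∀ x ∈ U, ∀ i j k : n,
    ∑ l : n,
      (P x l i * fderiv ℝ (fun y => P y j k) x (Pi.single l 1) +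
        P x l j * fderiv ℝ (fun y => P y k i) x (Pi.single l 1) +
        P x l k * fderiv ℝ (fun y => P y i j) x (Pi.single l 1)) = 0

/-- The Hamiltonian vector field `π(x)·∇H(x)` of a matrix-valued map `P` and Hamiltonian `H`. -/
noncomputable def hamVF {n : Type*} [Fintype n] [DecidableEq n]
    (P : (n → ℝ) → Matrix n n ℝ) (H : (n → ℝ) → ℝ) (x : n → ℝ) : n → ℝ :=
  (P x).mulVec fun j => fderiv ℝ H x (Pi.single j 1)

/-- The second Poisson structure of `N` coupled endemic SIRS populations, on `ℝ^{3N}` with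
coordinates `(S_a, I_a, R_a) = (x (a,0), x (a,1), x (a,2))`:
`π₂_{S_a I_a} = −β_a·S_a·I_a + μ_a·I_a`, `π₂_{S_a R_a} = β_a·S_a·I_a − μ_a·I_a`,
`π₂_{I_a R_a} = −β_a·S_a·I_a + μ_a·I_a`, `π₂_{R_a R_b} = τ_{ab}` for `a ≠ b`,
all other independent entries zero. -/
noncomputable def sirsIntPoisson2 (N : ℕ) (β μ : Fin N → ℝ) (τ : Fin N → Fin N → ℝ)
    (x : Fin N × Fin 3 → ℝ) : Matrix (Fin N × Fin 3) (Fin N × Fin 3) ℝ :=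
  fun p q =>
    if p.1 = q.1 then
      if p.2 = 0 ∧ q.2 = 1 then -β p.1 * x (p.1, 0) * x (p.1, 1) + μ p.1 * x (p.1, 1)
      else if p.2 = 1 ∧ q.2 = 0 then
        -(-β p.1 * x (p.1, 0) * x (p.1, 1) + μ p.1 * x (p.1, 1))
      else if p.2 = 0 ∧ q.2 = 2 then β p.1 * x (p.1, 0) * x (p.1, 1) - μ p.1 * x (p.1, 1)
      else if p.2 = 2 ∧ q.2 = 0 then
        -(β p.1 * x (p.1, 0) * x (p.1, 1) - μ p.1 * x (p.1, 1))
      else if p.2 = 1 ∧ q.2 = 2 then -β p.1 * x (p.1, 0) * x (p.1, 1) + μ p.1 * x (p.1, 1)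
      else if p.2 = 2 ∧ q.2 = 1 then
        -(-β p.1 * x (p.1, 0) * x (p.1, 1) + μ p.1 * x (p.1, 1))
      else 0
    else
      if p.2 = 2 ∧ q.2 = 2 then τ p.1 q.1 else 0

noncomputable def cMat : Fin 3 → Fin 3 → ℝ :=
  ![![0,1,-1],![-1,0,1],![1,-1,0]]

lemma entry_eq {N : ℕ} (β μ : Fin N → ℝ) (τ : Fin N → Fin N → ℝ) (x : Fin N × Fin 3 → ℝ)
    (p q : Fin N × Fin 3) :
    sirsIntPoisson2 N β μ τ x p q =
      if p.1 = q.1 then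
        cMat p.2 q.2 * (-β p.1 * x (p.1,0) * x (p.1,1) + μ p.1 * x (p.1,1))
      else if p.2 = 2 ∧ q.2 = 2 then τ p.1 q.1 else 0 := by
  rcases p with ⟨a, m⟩; rcases q with ⟨b, n⟩
  simp only [sirsIntPoisson2]
  by_cases h : a = b
  · simp only [h, if_pos rfl]
    fin_cases m <;> fin_cases n <;> simp [cMat] <;> ring
  · simp [h]

lemma hasFDerivAt_g {N : ℕ} (β μ : Fin N → ℝ) (a : Fin N) (x : Fin N × Fin 3 → ℝ) :
    HasFDerivAt (fun y : Fin N × Fin 3 → ℝ => -β a * y (a,0) * y (a,1) + μ a * y (a,1))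
      ((-β a * x (a,1)) • (ContinuousLinearMap.proj (a,0) : (Fin N × Fin 3 → ℝ) →L[ℝ] ℝ) +
       (-β a * x (a,0) + μ a) • (ContinuousLinearMap.proj (a,1) : (Fin N × Fin 3 → ℝ) →L[ℝ] ℝ)) x := by
  have h0 : HasFDerivAt (fun y : Fin N × Fin 3 → ℝ => y (a,0))
      (ContinuousLinearMap.proj (a,0) : (Fin N × Fin 3 → ℝ) →L[ℝ] ℝ) x :=
    (ContinuousLinearMap.proj (a,0) : (Fin N × Fin 3 → ℝ) →L[ℝ] ℝ).hasFDerivAt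
  have h1 : HasFDerivAt (fun y : Fin N × Fin 3 → ℝ => y (a,1))
      (ContinuousLinearMap.proj (a,1) : (Fin N × Fin 3 → ℝ) →L[ℝ] ℝ) x :=
    (ContinuousLinearMap.proj (a,1) : (Fin N × Fin 3 → ℝ) →L[ℝ] ℝ).hasFDerivAt
  have h01 := h0.mul h1
  have h2 := (h01.const_mul (-β a)).add (h1.const_mul (μ a))
  convert h2 using 1
  any_goals rfl
  · funext y; simp only [Pi.add_apply, Pi.mul_apply]; ring
  · ext v
    simp [ContinuousLinearMap.proj_apply, smul_eq_mul]
    ring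

lemma fderiv_entry {N : ℕ} (β μ : Fin N → ℝ) (τ : Fin N → Fin N → ℝ) (x : Fin N × Fin 3 → ℝ)
    (j k l : Fin N × Fin 3) :
    fderiv ℝ (fun y => sirsIntPoisson2 N β μ τ y j k) x (Pi.single l 1) =
      if j.1 = k.1 then
        cMat j.2 k.2 *
          ((-β j.1 * x (j.1,1)) * (if l = (j.1,(0:Fin 3)) then 1 else 0) +
           (-β j.1 * x (j.1,0) + μ j.1) * (if l = (j.1,(1:Fin 3)) then 1 else 0))
      else 0 := by
  have hfun : (fun y => sirsIntPoisson2 N β μ τ y j k) =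
      fun y : Fin N × Fin 3 → ℝ =>
        if j.1 = k.1 then
          cMat j.2 k.2 * (-β j.1 * y (j.1,0) * y (j.1,1) + μ j.1 * y (j.1,1))
        else if j.2 = 2 ∧ k.2 = 2 then τ j.1 k.1 else 0 := by
    funext y; exact entry_eq β μ τ y j k
  rw [hfun]
  by_cases h : j.1 = k.1
  · simp only [if_pos h]
    have := ((hasFDerivAt_g β μ j.1 x).const_mul (cMat j.2 k.2)).fderiv
    rw [this]
    have hs : ∀ (p : Fin N × Fin 3), (Pi.single l (1:ℝ) : Fin N × Fin 3 → ℝ) p = if l = p then (1:ℝ) else 0 := by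
      intro p; rw [Pi.single_apply]
      by_cases h : l = p
      · simp [h]
      · rw [if_neg (fun hh => h hh.symm), if_neg h]
    simp only [ContinuousLinearMap.add_apply, ContinuousLinearMap.coe_smul', Pi.smul_apply,
      ContinuousLinearMap.proj_apply, smul_eq_mul, hs]
  · simp only [if_neg h]
    rw [fderiv_fun_const]
    simp

lemma term_zero {N : ℕ} (β μ : Fin N → ℝ) (τ : Fin N → Fin N → ℝ) (x : Fin N × Fin 3 → ℝ)
    (i j k : Fin N × Fin 3) (H : ¬(j.1 = k.1 ∧ j.1 = i.1)) (l : Fin N × Fin 3) :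
    sirsIntPoisson2 N β μ τ x l i *
      fderiv ℝ (fun y => sirsIntPoisson2 N β μ τ y j k) x (Pi.single l 1) = 0 := by
  rw [fderiv_entry, entry_eq]
  by_cases hjk : j.1 = k.1
  · rw [if_pos hjk]
    have hji : j.1 ≠ i.1 := fun h => H ⟨hjk, h⟩
    by_cases h0 : l = (j.1, (0:Fin 3))
    · have hl1 : l.1 = j.1 := by rw [h0]
      have hl2 : l.2 = 0 := by rw [h0]
      rw [if_neg (by rw [hl1]; exact hji)]
      rw [if_neg (by rw [hl2]; simp)]
      ring
    · by_cases h1 : l = (j.1, (1:Fin 3))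
      · have hl1 : l.1 = j.1 := by rw [h1]
        have hl2 : l.2 = 1 := by rw [h1]
        rw [if_neg (by rw [hl1]; exact hji)]
        rw [if_neg (by rw [hl2]; simp)]
        ring
      · rw [if_neg h0, if_neg h1]
        ring
  · rw [if_neg hjk]
    ring

lemma jacobi_block {N : ℕ} (β μ : Fin N → ℝ) (τ : Fin N → Fin N → ℝ) (x : Fin N × Fin 3 → ℝ)
    (a : Fin N) (mi mj mk : Fin 3) :
    ∑ l : Fin N × Fin 3,
      (sirsIntPoisson2 N β μ τ x l (a,mi) * fderiv ℝ (fun y => sirsIntPoisson2 N β μ τ y (a,mj) (a,mk)) x (Pi.single l 1) +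
       sirsIntPoisson2 N β μ τ x l (a,mj) * fderiv ℝ (fun y => sirsIntPoisson2 N β μ τ y (a,mk) (a,mi)) x (Pi.single l 1) +
       sirsIntPoisson2 N β μ τ x l (a,mk) * fderiv ℝ (fun y => sirsIntPoisson2 N β μ τ y (a,mi) (a,mj)) x (Pi.single l 1)) = 0 := by
  simp only [fderiv_entry]
  simp only [entry_eq, if_pos rfl]
  rw [Fintype.sum_prod_type]
  simp only [Fin.sum_univ_three, Prod.mk.injEq]
  simp [mul_ite, ite_mul, mul_zero, zero_mul, mul_one,
    Finset.sum_add_distrib, Finset.sum_ite_eq', add_zero, zero_add]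
  fin_cases mi <;> fin_cases mj <;> fin_cases mk <;> simp [cMat] <;> ring

lemma fderiv_H {N : ℕ} (α β μ : Fin N → ℝ) (x : Fin N × Fin 3 → ℝ)
    (hx : ∀ a, β a * x (a, 0) - μ a > 0) (q : Fin N × Fin 3) :
    fderiv ℝ (fun y : Fin N × Fin 3 → ℝ =>
        -∑ k : Fin N, (y (k, 2) + α k / β k * Real.log (β k * y (k, 0) - μ k))) x
      (Pi.single q 1) =
      (if q.2 = 0 then -(α q.1 / β q.1 * (β q.1 * x (q.1,0) - μ q.1)⁻¹ * β q.1) else 0)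
        + (if q.2 = 2 then -1 else 0) := by
  have hL : ∀ k : Fin N, HasFDerivAt
      (fun y : Fin N × Fin 3 → ℝ => y (k,2) + α k / β k * Real.log (β k * y (k,0) - μ k))
      ((ContinuousLinearMap.proj (k,2) : (Fin N × Fin 3 → ℝ) →L[ℝ] ℝ) +
        (α k / β k) • ((β k * x (k,0) - μ k)⁻¹ •
          (β k • (ContinuousLinearMap.proj (k,0) : (Fin N × Fin 3 → ℝ) →L[ℝ] ℝ)))) x := by
    intro k
    have hin : HasFDerivAt (fun y : Fin N × Fin 3 → ℝ => β k * y (k,0) - μ k)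
        (β k • (ContinuousLinearMap.proj (k,0) : (Fin N × Fin 3 → ℝ) →L[ℝ] ℝ)) x :=
      ((ContinuousLinearMap.proj (k,0) : (Fin N × Fin 3 → ℝ) →L[ℝ] ℝ).hasFDerivAt.const_mul
        (β k)).sub_const (μ k)
    have hlog := hin.log (ne_of_gt (hx k))
    exact (ContinuousLinearMap.proj (k,2) : (Fin N × Fin 3 → ℝ) →L[ℝ] ℝ).hasFDerivAt.add
      (hlog.const_mul (α k / β k))
  have hH : HasFDerivAt
      (fun y : Fin N × Fin 3 → ℝ =>
        -∑ k : Fin N, (y (k, 2) + α k / β k * Real.log (β k * y (k, 0) - μ k)))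
      (-(∑ k : Fin N, ((ContinuousLinearMap.proj (k,2) : (Fin N × Fin 3 → ℝ) →L[ℝ] ℝ) +
        (α k / β k) • ((β k * x (k,0) - μ k)⁻¹ •
          (β k • (ContinuousLinearMap.proj (k,0) : (Fin N × Fin 3 → ℝ) →L[ℝ] ℝ)))))) x :=
    (HasFDerivAt.fun_sum (fun k _ => hL k)).neg
  rw [hH.fderiv]
  rcases q with ⟨b, n⟩
  simp only [ContinuousLinearMap.neg_apply, ContinuousLinearMap.coe_sum', Finset.sum_apply,
    ContinuousLinearMap.add_apply, ContinuousLinearMap.coe_smul', Pi.smul_apply,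
    ContinuousLinearMap.proj_apply, smul_eq_mul, Pi.single_apply, Prod.mk.injEq]
  fin_cases n <;>
    simp [Finset.sum_add_distrib, Finset.sum_ite_eq', mul_ite, mul_one, mul_zero, mul_assoc]

lemma sirs_ham0 {N : ℕ} (α β μ : Fin N → ℝ) (τ : Fin N → Fin N → ℝ) (x : Fin N × Fin 3 → ℝ)
    (hβ : ∀ a, β a ≠ 0) (hx : ∀ a, β a * x (a, 0) - μ a > 0) (a : Fin N) :
    hamVF (sirsIntPoisson2 N β μ τ)
        (fun y => -∑ k : Fin N, (y (k, 2) + α k / β k * Real.log (β k * y (k, 0) - μ k)))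
        x (a, 0) =
      -β a * x (a, 0) * x (a, 1) + μ a * x (a, 1) := by
  simp only [hamVF, Matrix.mulVec, dotProduct]
  simp only [entry_eq, fderiv_H α β μ x hx]
  rw [Fintype.sum_prod_type]
  simp [Fin.sum_univ_three, Finset.sum_ite_eq, mul_ite, ite_mul, mul_zero, zero_mul, cMat]

lemma sirs_ham1 {N : ℕ} (α β μ : Fin N → ℝ) (τ : Fin N → Fin N → ℝ) (x : Fin N × Fin 3 → ℝ)
    (hβ : ∀ a, β a ≠ 0) (hx : ∀ a, β a * x (a, 0) - μ a > 0) (a : Fin N) :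
    hamVF (sirsIntPoisson2 N β μ τ)
        (fun y => -∑ k : Fin N, (y (k, 2) + α k / β k * Real.log (β k * y (k, 0) - μ k)))
        x (a, 1) =
      β a * x (a, 0) * x (a, 1) - (α a + μ a) * x (a, 1) := by
  simp only [hamVF, Matrix.mulVec, dotProduct]
  simp only [entry_eq, fderiv_H α β μ x hx]
  rw [Fintype.sum_prod_type]
  simp [Fin.sum_univ_three, Finset.sum_ite_eq, mul_ite, ite_mul, mul_zero, zero_mul, cMat]
  have h1 := (hx a).ne'
  have h2 := hβ a
  field_simp
  ring

lemma sirs_ham2 {N : ℕ} (α β μ : Fin N → ℝ) (τ : Fin N → Fin N → ℝ) (x : Fin N × Fin 3 → ℝ)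
    (hβ : ∀ a, β a ≠ 0) (hx : ∀ a, β a * x (a, 0) - μ a > 0) (a : Fin N) :
    hamVF (sirsIntPoisson2 N β μ τ)
        (fun y => -∑ k : Fin N, (y (k, 2) + α k / β k * Real.log (β k * y (k, 0) - μ k)))
        x (a, 2) =
      α a * x (a, 1) - ∑ k ∈ Finset.univ.erase a, τ a k := by
  simp only [hamVF, Matrix.mulVec, dotProduct]
  simp only [entry_eq, fderiv_H α β μ x hx]
  rw [Fintype.sum_prod_type]
  simp [Fin.sum_univ_three, Finset.sum_ite_eq, mul_ite, ite_mul, mul_zero, zero_mul, cMat]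
  have hsplit : ∀ b : Fin N, (if a = b then
        -((-(β a * x (a, 0) * x (a, 1)) + μ a * x (a, 1)) *
          (α b / β b * (β b * x (b, 0) - μ b)⁻¹ * β b))
      else -τ a b)
      = (if a = b then
        -((-(β a * x (a, 0) * x (a, 1)) + μ a * x (a, 1)) *
          (α b / β b * (β b * x (b, 0) - μ b)⁻¹ * β b)) + τ a b
      else 0) + (-τ a b) := by
    intro b; split_ifs <;> ring
  simp only [hsplit, Finset.sum_add_distrib, Finset.sum_ite_eq, Finset.mem_univ, if_true,
    Finset.sum_neg_distrib]
  have h1 := (hx a).ne'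
  have h2 := hβ a
  field_simp
  ring

/-- On `U = {x : β_a·S_a − μ_a > 0 for all a}`, the second structure of the coupled endemic
SIRS model satisfies the Jacobi identity, and with the Hamiltonian
`H₂ = −∑ₖ (R_k + (α_k/β_k)·log(β_k·S_k − μ_k))` its Hamiltonian vector field is the coupled
endemic SIRS vector field. -/
theorem coupledEndemicSIRS_second_hamiltonian_structure (N : ℕ) (hN : 1 ≤ N)
    (α β μ : Fin N → ℝ) (hβ : ∀ a, β a ≠ 0) (τ : Fin N → Fin N → ℝ)
    (hτskew : ∀ a b, a ≠ b → τ a b = -τ b a) :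
    JacobiIdentityOn (sirsIntPoisson2 N β μ τ)
      {x : Fin N × Fin 3 → ℝ | ∀ a, β a * x (a, 0) - μ a > 0} ∧
    (∀ x : Fin N × Fin 3 → ℝ, (∀ a, β a * x (a, 0) - μ a > 0) → ∀ a : Fin N,
      hamVF (sirsIntPoisson2 N β μ τ)
          (fun y => -∑ k : Fin N, (y (k, 2) + α k / β k * Real.log (β k * y (k, 0) - μ k)))
          x (a, 0) =
        -β a * x (a, 0) * x (a, 1) + μ a * x (a, 1) ∧
      hamVF (sirsIntPoisson2 N β μ τ)
          (fun y => -∑ k : Fin N, (y (k, 2) + α k / β k * Real.log (β k * y (k, 0) - μ k)))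
          x (a, 1) =
        β a * x (a, 0) * x (a, 1) - (α a + μ a) * x (a, 1) ∧
      hamVF (sirsIntPoisson2 N β μ τ)
          (fun y => -∑ k : Fin N, (y (k, 2) + α k / β k * Real.log (β k * y (k, 0) - μ k)))
          x (a, 2) =
        α a * x (a, 1) - ∑ k ∈ Finset.univ.erase a, τ a k) := by
  constructor
  · intro x hx i j k
    by_cases hall : i.1 = j.1 ∧ j.1 = k.1
    · obtain ⟨h1, h2⟩ := hall
      obtain ⟨a, mi⟩ := i
      obtain ⟨b, mj⟩ := j
      obtain ⟨c, mk⟩ := k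
      have hab : a = b := h1
      have hbc : b = c := h2
      subst hab; subst hbc
      exact jacobi_block β μ τ x a mi mj mk
    · apply Finset.sum_eq_zero
      intro l _
      rw [term_zero β μ τ x i j k (fun h => hall ⟨h.2.symm, h.1⟩) l,
          term_zero β μ τ x j k i (fun h => hall ⟨h.1.symm.trans h.2, h.2.symm⟩) l,
          term_zero β μ τ x k i j (fun h => hall ⟨h.1, h.1.symm.trans h.2⟩) l]
      ring
  · intro x hx a
    exact ⟨sirs_ham0 α β μ τ x hβ hx a, sirs_ham1 α β μ τ x hβ hx a,
      sirs_ham2 α β μ τ x hβ hx a⟩
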